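/- Let V be a finite-dimensional real inner product space, C ⊆ V a proper cone and F a Finsler function on C which is upper semicontinuous on C. Then the polar of the polar Finsler function recovers F: for every y ∈ C, F y = sSup {w ∈ ℝ | 0 ≤ w ∧ ∀ p ∈ C^o, ⟪p, y⟫ + w * F^o p ≤ 0}. -/

import Mathlib

/-- The polar cone of `C`. -/
def polarConeSet {V : Type*} [NormedAddCommGroup V] [InnerProductSpace ℝ V]
    (C : Set V) : Set V :=
  {p : V | p ≠ 0 ∧ ∀ y ∈ C, (inner ℝ p y : ℝ) ≤ 0}

/-- The set whose supremum defines the polar Finsler function `F^o p`. -/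
def polarWSet {V : Type*} [NormedAddCommGroup V] [InnerProductSpace ℝ V]
    (C : Set V) (F : V → ℝ) (p : V) : Set ℝ :=
  {w : ℝ | 0 ≤ w ∧ ∀ y ∈ C, (inner ℝ p y : ℝ) + w * F y ≤ 0}

/-- The polar Finsler function `F^o`. -/
noncomputable def polarFinsler {V : Type*} [NormedAddCommGroup V] [InnerProductSpace ℝ V]
    (C : Set V) (F : V → ℝ) (p : V) : ℝ :=
  sSup (polarWSet C F p)

/-- The polar of the polar Finsler function recovers `F`: `(F^o)^o = F` on `C`. -/
theorem polar_polar_finsler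
    {V : Type*} [NormedAddCommGroup V] [InnerProductSpace ℝ V] [FiniteDimensional ℝ V]
    (C : Set V) (hne : C.Nonempty) (hconv : Convex ℝ C) (h0 : (0:V) ∉ C)
    (hcone : ∀ (s : ℝ) (y : V), 0 < s → y ∈ C → s • y ∈ C)
    (hclosed : IsClosed (C ∪ {0}))
    (hint : (interior (C ∪ {0})).Nonempty)
    (F : V → ℝ)
    (hFnn : ∀ y ∈ C, 0 ≤ F y)
    (hFhom : ∀ (s : ℝ) (y : V), 0 < s → y ∈ C → F (s • y) = s * F y)
    (hFconc : ∀ y ∈ C, ∀ w ∈ C, ∀ t : ℝ, t ∈ Set.Icc (0:ℝ) 1 →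
      t * F y + (1 - t) * F w ≤ F (t • y + (1 - t) • w))
    (hFpos : ∃ y₁ ∈ C, 0 < F y₁)
    (hFusc : UpperSemicontinuousOn F C) :
    ∀ y ∈ C,
      F y = sSup {w : ℝ | 0 ≤ w ∧ ∀ p ∈ polarConeSet C,
        (inner ℝ p y : ℝ) + w * polarFinsler C F p ≤ 0} := by
  obtain ⟨y₁, hy₁C, hy₁pos⟩ := hFpos
  have hCne0 : ∀ z ∈ C, z ≠ 0 := fun z hz h => h0 (h ▸ hz)
  -- Step 1: a linear upper bound `F z ≤ K * ‖z‖` on `C`.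
  obtain ⟨K, hK0, hKb⟩ : ∃ K : ℝ, 0 ≤ K ∧ ∀ z ∈ C, F z ≤ K * ‖z‖ := by
    obtain ⟨x₀, hx₀⟩ := hint
    have hx₀ne : x₀ ≠ 0 := by
      rintro rfl
      have hmem : C ∪ {0} ∈ nhds (0:V) := mem_interior_iff_mem_nhds.1 hx₀
      obtain ⟨ε, hε, hball⟩ := Metric.mem_nhds_iff.1 hmem
      have hy₁ne : y₁ ≠ 0 := hCne0 y₁ hy₁C
      have hy₁n : (0:ℝ) < ‖y₁‖ := norm_pos_iff.2 hy₁ne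
      set v : V := (ε / (2 * ‖y₁‖)) • y₁ with hv
      have hvc : (0:ℝ) < ε / (2 * ‖y₁‖) := by positivity
      have hvC : v ∈ C := hcone _ _ hvc hy₁C
      have hvnorm : ‖v‖ < ε := by
        rw [hv, norm_smul, Real.norm_eq_abs, abs_of_pos hvc]
        rw [div_mul_eq_mul_div, div_lt_iff₀ (by positivity)]
        nlinarith
      have hnegv : -v ∈ Metric.ball (0:V) ε := by
        simpa [Metric.mem_ball, dist_eq_norm] using hvnorm
      have hnegvC : -v ∈ C := by
        rcases hball hnegv with h | h
        · exact h
        · exact absurd (by simpa [neg_eq_zero] using h) (hCne0 v hvC)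
      have hmid : (1/2 : ℝ) • v + (1/2 : ℝ) • (-v) ∈ C :=
        hconv hvC hnegvC (by norm_num) (by norm_num) (by norm_num)
      rw [smul_neg, add_neg_cancel] at hmid
      exact h0 hmid
    have hx₀C : x₀ ∈ C := by
      rcases interior_subset hx₀ with h | h
      · exact h
      · exact absurd h hx₀ne
    obtain ⟨ε, hε, hball⟩ := Metric.mem_nhds_iff.1 (mem_interior_iff_mem_nhds.1 hx₀)
    refine ⟨2 * F x₀ / ε, div_nonneg (by nlinarith [hFnn x₀ hx₀C]) hε.le, ?_⟩
    intro z hz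
    have hzne : z ≠ 0 := hCne0 z hz
    have hzn : (0:ℝ) < ‖z‖ := norm_pos_iff.2 hzne
    set c : ℝ := ε / (2 * ‖z‖) with hc
    have hcpos : (0:ℝ) < c := by positivity
    have hz'norm : ‖c • z‖ = ε / 2 := by
      rw [norm_smul, Real.norm_eq_abs, abs_of_pos hcpos, hc]
      field_simp
    set u : V := x₀ - c • z with hu
    have huball : u ∈ Metric.ball x₀ ε := by
      rw [Metric.mem_ball, dist_eq_norm, hu, sub_sub_cancel_left, norm_neg, hz'norm]
      linarith
    have hkey : c * F z ≤ F x₀ := by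
      rcases hball huball with huC | hu0
      · -- u ∈ C; use concavity at the midpoint
        have h2z : (2 * c) • z ∈ C := hcone _ _ (by positivity) hz
        have h2u : (2:ℝ) • u ∈ C := hcone _ _ (by norm_num) huC
        have hcc := hFconc _ h2z _ h2u (1/2) (by norm_num)
        have harg : (1/2 : ℝ) • ((2 * c) • z) + (1 - 1/2 : ℝ) • ((2:ℝ) • u) = x₀ := by
          rw [smul_smul, smul_smul, hu]
          norm_num
          module
        rw [harg] at hcc
        have h2z' : F ((2 * c) • z) = (2 * c) * F z := hFhom _ _ (by positivity) hz
        have h2u' : 0 ≤ F ((2:ℝ) • u) := hFnn _ h2u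
        rw [h2z'] at hcc
        nlinarith
      · -- u = 0, i.e. x₀ = c • z
        have hx₀eq : x₀ = c • z := by
          have h' : x₀ - c • z = 0 := by simpa [hu] using hu0
          exact sub_eq_zero.1 h'
        have : F x₀ = c * F z := by rw [hx₀eq, hFhom _ _ hcpos hz]
        linarith
    rw [div_mul_eq_mul_div, le_div_iff₀ hε]
    have : c * F z * (2 * ‖z‖) ≤ F x₀ * (2 * ‖z‖) :=
      mul_le_mul_of_nonneg_right hkey (by positivity)
    calc F z * ε = c * F z * (2 * ‖z‖) := by rw [hc]; field_simp
      _ ≤ F x₀ * (2 * ‖z‖) := this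
      _ = 2 * F x₀ * ‖z‖ := by ring
  -- Step 2: the hypograph cone `H` in `V × ℝ`.
  set H : Set (V × ℝ) :=
    {q | (q.1 ∈ C ∧ q.2 ≤ F q.1) ∨ (q.1 = 0 ∧ q.2 ≤ 0)} with hH
  have hHcone : ∀ (c : ℝ), 0 < c → ∀ q ∈ H, c • q ∈ H := by
    rintro c hc ⟨z, t⟩ (⟨hzC, hzt⟩ | ⟨hz0, ht0⟩)
    · left
      refine ⟨hcone c z hc hzC, ?_⟩
      show c • t ≤ F (c • z)
      rw [hFhom c z hc hzC, smul_eq_mul]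
      exact mul_le_mul_of_nonneg_left hzt hc.le
    · right
      constructor
      · have hz0' : z = 0 := hz0
        show c • z = 0
        rw [hz0', smul_zero]
      · show c • t ≤ 0
        rw [smul_eq_mul]
        exact mul_nonpos_of_nonneg_of_nonpos hc.le ht0
  have hHconv : Convex ℝ H := by
    rintro ⟨z₁, t₁⟩ hq₁ ⟨z₂, t₂⟩ hq₂ a b ha hb hab
    rcases eq_or_lt_of_le ha with rfl | ha'
    · simp only [zero_smul, zero_add]
      have hb1 : b = 1 := by linarith
      rw [hb1, one_smul]; exact hq₂
    rcases eq_or_lt_of_le hb with rfl | hb'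
    · simp only [zero_smul, add_zero]
      have ha1 : a = 1 := by linarith
      rw [ha1, one_smul]; exact hq₁
    rcases hq₁ with ⟨hz₁C, ht₁⟩ | ⟨hz₁0, ht₁⟩ <;>
      rcases hq₂ with ⟨hz₂C, ht₂⟩ | ⟨hz₂0, ht₂⟩
    · -- both in C: use concavity
      left
      refine ⟨hconv hz₁C hz₂C ha hb hab, ?_⟩
      show a • t₁ + b • t₂ ≤ F (a • z₁ + b • z₂)
      have hb' : b = 1 - a := by linarith
      have hcc := hFconc z₁ hz₁C z₂ hz₂C a ⟨ha, by linarith⟩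
      rw [← hb'] at hcc
      have h1 : a * t₁ ≤ a * F z₁ := mul_le_mul_of_nonneg_left ht₁ ha
      have h2 : b * t₂ ≤ b * F z₂ := mul_le_mul_of_nonneg_left ht₂ hb
      simp only [smul_eq_mul]
      linarith
    · -- z₂ = 0
      left
      subst hz₂0
      have hmem : a • z₁ ∈ C := hcone a z₁ ha' hz₁C
      refine ⟨by simpa using hmem, ?_⟩
      show a • t₁ + b • t₂ ≤ F (a • z₁ + b • (0:V))
      simp only [smul_zero, add_zero, smul_eq_mul]
      rw [hFhom a z₁ ha' hz₁C]
      have h1 : a * t₁ ≤ a * F z₁ := mul_le_mul_of_nonneg_left ht₁ ha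
      have h2 : b * t₂ ≤ 0 := mul_nonpos_of_nonneg_of_nonpos hb ht₂
      linarith
    · -- z₁ = 0
      left
      subst hz₁0
      have hmem : b • z₂ ∈ C := hcone b z₂ hb' hz₂C
      refine ⟨by simpa using hmem, ?_⟩
      show a • t₁ + b • t₂ ≤ F (a • (0:V) + b • z₂)
      simp only [smul_zero, zero_add, smul_eq_mul]
      rw [hFhom b z₂ hb' hz₂C]
      have h1 : a * t₁ ≤ 0 := mul_nonpos_of_nonneg_of_nonpos ha ht₁
      have h2 : b * t₂ ≤ b * F z₂ := mul_le_mul_of_nonneg_left ht₂ hb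
      linarith
    · right
      subst hz₁0; subst hz₂0
      constructor
      · show a • (0:V) + b • (0:V) = 0; simp
      · show a • t₁ + b • t₂ ≤ 0
        simp only [smul_eq_mul]
        have h1 : a * t₁ ≤ 0 := mul_nonpos_of_nonneg_of_nonpos ha ht₁
        have h2 : b * t₂ ≤ 0 := mul_nonpos_of_nonneg_of_nonpos hb ht₂
        linarith
  have hHclosed : IsClosed H := by
    apply IsSeqClosed.isClosed
    intro q q₀ hq hlim
    have hfst : Filter.Tendsto (fun n => (q n).1) Filter.atTop (nhds q₀.1) :=
      (continuous_fst.tendsto q₀).comp hlim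
    have hsnd : Filter.Tendsto (fun n => (q n).2) Filter.atTop (nhds q₀.2) :=
      (continuous_snd.tendsto q₀).comp hlim
    have hq₀1 : q₀.1 ∈ C ∪ {0} := by
      refine hclosed.isSeqClosed (fun n => ?_) hfst
      rcases hq n with ⟨h, _⟩ | ⟨h, _⟩
      · exact Or.inl h
      · exact Or.inr h
    rcases hq₀1 with hq₀C | hq₀0
    · -- limit in C: use upper semicontinuity
      left
      refine ⟨hq₀C, ?_⟩
      have hq₀ne : q₀.1 ≠ 0 := hCne0 _ hq₀C
      have hq₀n : (0:ℝ) < ‖q₀.1‖ := norm_pos_iff.2 hq₀ne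
      refine le_of_forall_pos_le_add ?_
      intro ε hεp
      have husc := hFusc q₀.1 hq₀C (F q₀.1 + ε) (by linarith)
      obtain ⟨δ, hδ, hδsub⟩ := Metric.mem_nhdsWithin_iff.1 husc
      set δ' : ℝ := min δ ‖q₀.1‖ with hδ'
      have hδ'pos : 0 < δ' := lt_min hδ hq₀n
      have hev : ∀ᶠ n in Filter.atTop, dist ((q n).1) q₀.1 < δ' :=
        (Metric.tendsto_nhds.1 hfst) δ' hδ'pos
      have hev2 : ∀ᶠ n in Filter.atTop, (q n).2 ≤ F q₀.1 + ε := by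
        filter_upwards [hev] with n hn
        have hne : (q n).1 ≠ 0 := by
          intro h
          rw [h, dist_eq_norm, zero_sub, norm_neg] at hn
          exact absurd hn (not_lt.2 (min_le_right δ ‖q₀.1‖))
        have hnC : (q n).1 ∈ C := by
          rcases hq n with ⟨h, _⟩ | ⟨h, _⟩
          · exact h
          · exact absurd h hne
        have hball : (q n).1 ∈ Metric.ball q₀.1 δ ∩ C :=
          ⟨lt_of_lt_of_le hn (min_le_left _ _), hnC⟩
        have hF : F ((q n).1) < F q₀.1 + ε := hδsub hball
        have ht : (q n).2 ≤ F ((q n).1) := by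
          rcases hq n with ⟨_, h⟩ | ⟨h, _⟩
          · exact h
          · exact absurd h hne
        linarith
      exact le_of_tendsto hsnd hev2
    · -- limit is 0: use the linear bound
      right
      refine ⟨hq₀0, ?_⟩
      have hbnd : ∀ n, (q n).2 ≤ K * ‖(q n).1‖ := by
        intro n
        rcases hq n with ⟨hC, ht⟩ | ⟨h0', ht⟩
        · exact le_trans ht (hKb _ hC)
        · rw [h0', norm_zero, mul_zero]; exact ht
      have hlimK : Filter.Tendsto (fun n => K * ‖(q n).1‖) Filter.atTop
          (nhds (K * ‖q₀.1‖)) := (tendsto_const_nhds.mul (hfst.norm))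
      have := le_of_tendsto_of_tendsto' hsnd hlimK hbnd
      rw [hq₀0, norm_zero, mul_zero] at this
      exact this
  -- Step 3: basic facts about the polar Finsler function
  have hWne : ∀ p ∈ polarConeSet C, (0:ℝ) ∈ polarWSet C F p := by
    intro p hp
    exact ⟨le_refl 0, fun z hz => by simpa using hp.2 z hz⟩
  have hWbdd : ∀ p : V, BddAbove (polarWSet C F p) := by
    intro p
    refine ⟨-(inner ℝ p y₁ : ℝ) / F y₁, ?_⟩
    rintro w' ⟨hw'0, hw'⟩
    rw [le_div_iff₀ hy₁pos]
    linarith [hw' y₁ hy₁C]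
  have hFoF : ∀ p ∈ polarConeSet C, ∀ z ∈ C,
      (inner ℝ p z : ℝ) + polarFinsler C F p * F z ≤ 0 := by
    intro p hp z hz
    rcases eq_or_lt_of_le (hFnn z hz) with hz0 | hzpos
    · rw [← hz0, mul_zero, add_zero]
      exact hp.2 z hz
    · have hle : polarFinsler C F p ≤ -(inner ℝ p z : ℝ) / F z := by
        apply csSup_le ⟨0, hWne p hp⟩
        rintro w' ⟨hw'0, hw'⟩
        rw [le_div_iff₀ hzpos]
        linarith [hw' z hz]
      have := mul_le_mul_of_nonneg_right hle (le_of_lt hzpos)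
      rw [div_mul_cancel₀ _ (ne_of_gt hzpos)] at this
      linarith
  -- Step 4: main inequality via separation
  intro y hy
  have hyne : y ≠ 0 := hCne0 y hy
  set S : Set ℝ := {w : ℝ | 0 ≤ w ∧ ∀ p ∈ polarConeSet C,
      (inner ℝ p y : ℝ) + w * polarFinsler C F p ≤ 0} with hS
  have h0S : (0:ℝ) ∈ S := by
    refine ⟨le_refl 0, fun p hp => ?_⟩
    simpa using hp.2 y hy
  have hFyS : F y ∈ S := by
    refine ⟨hFnn y hy, fun p hp => ?_⟩
    have := hFoF p hp y hy
    linarith [mul_comm (F y) (polarFinsler C F p)]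
  have key : ∀ w ∈ S, w ≤ F y := by
    rintro w ⟨hw0, hwS⟩
    by_contra hlt
    push_neg at hlt
    -- (y, w) ∉ H, separate
    have hnotH : ((y, w) : V × ℝ) ∉ H := by
      rintro (⟨_, hle⟩ | ⟨hy0, _⟩)
      · exact absurd hle (not_le.2 hlt)
      · exact hyne hy0
    obtain ⟨f, u, hfH, hfu⟩ := geometric_hahn_banach_closed_point hHconv hHclosed hnotH
    have h00H : ((0:V), (0:ℝ)) ∈ H := Or.inr ⟨rfl, le_refl 0⟩
    have hu0 : 0 < u := by
      have := hfH _ h00H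
      rw [show ((0:V), (0:ℝ)) = 0 from rfl, map_zero] at this; exact this
    have hfle : ∀ q ∈ H, f q ≤ 0 := by
      intro q hq
      by_contra hpos
      push_neg at hpos
      have hc : (0:ℝ) < (u + 1) / f q := div_pos (by linarith) hpos
      have hcon := hfH _ (hHcone _ hc q hq)
      rw [map_smul, smul_eq_mul, div_mul_cancel₀ _ (ne_of_gt hpos)] at hcon
      linarith
    -- decompose f
    set g : V →L[ℝ] ℝ := f.comp (ContinuousLinearMap.inl ℝ V ℝ) with hg
    set p : V := (InnerProductSpace.toDual ℝ V).symm g with hp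
    set s : ℝ := f ((0:V), (1:ℝ)) with hs
    have hform : ∀ (z : V) (t : ℝ), f (z, t) = (inner ℝ p z : ℝ) + s * t := by
      intro z t
      have h1 : ((z, t) : V × ℝ) = ((z, (0:ℝ)) + ((0:V), t)) := by simp
      have h2 : (((0:V), t) : V × ℝ) = t • ((0:V), (1:ℝ)) := by
        simp [Prod.smul_mk]
      rw [h1, map_add, h2, map_smul, smul_eq_mul]
      have h3 : (inner ℝ p z : ℝ) = g z := by
        rw [hp]; exact InnerProductSpace.toDual_symm_apply
      rw [h3, hg]
      simp [mul_comm, hs]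
    have hs0 : 0 ≤ s := by
      have hm : (((0:V), (-1:ℝ)) : V × ℝ) ∈ H := Or.inr ⟨rfl, by norm_num⟩
      have := hfle _ hm
      rw [hform] at this
      simp only [inner_zero_right] at this
      linarith
    have hpz : ∀ z ∈ C, (inner ℝ p z : ℝ) ≤ 0 := by
      intro z hz
      have hm : ((z, (0:ℝ)) : V × ℝ) ∈ H := Or.inl ⟨hz, hFnn z hz⟩
      have := hfle _ hm
      rw [hform] at this
      simpa using this
    have hpFz : ∀ z ∈ C, (inner ℝ p z : ℝ) + s * F z ≤ 0 := by
      intro z hz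
      have hm : ((z, F z) : V × ℝ) ∈ H := Or.inl ⟨hz, le_refl _⟩
      have := hfle _ hm
      rwa [hform] at this
    have hyw : 0 < (inner ℝ p y : ℝ) + s * w := by
      have := hfu
      rw [hform] at this
      linarith
    rcases eq_or_lt_of_le hs0 with hs0' | hspos
    · rw [← hs0', zero_mul, add_zero] at hyw
      exact absurd (hpz y hy) (not_le.2 hyw)
    · have hpne : p ≠ 0 := by
        intro hp0
        have := hpFz y₁ hy₁C
        rw [hp0] at this
        simp only [inner_zero_left, zero_add] at this
        nlinarith
      have hpC : p ∈ polarConeSet C := ⟨hpne, hpz⟩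
      have hsmem : s ∈ polarWSet C F p := ⟨hs0, hpFz⟩
      have hsle : s ≤ polarFinsler C F p := le_csSup (hWbdd p) hsmem
      have hcontr := hwS p hpC
      nlinarith [mul_le_mul_of_nonneg_left hsle hw0]
  refine le_antisymm (le_csSup ⟨F y, key⟩ hFyS) (csSup_le ⟨0, h0S⟩ key)
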